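/- Fix α ∈ (0, 1/2), K > 0, n > 0, and δ ∈ (0, α/2). Define, for a ∈ (1, ∞), g(a) := 1 - α/2 + δ + (1/2)exp(-n(1-1/a)²/(2K)) - Φ(√(n/a)), where Φ is the standard normal c.d.f. Then lim_{a→1⁺} g(a) > 0 and lim_{a→∞} g(a) > 0, and the set {a ∈ (1, ∞) : g(a) < 0} is an open interval (possibly empty); if nonempty it has the form (a₁, a₂) with 1 < a₁ and a₂ < ∞. -/

import Mathlib

open MeasureTheory

/-- The standard normal density. -/
noncomputable def gpdf (t : ℝ) : ℝ := (Real.sqrt (2 * Real.pi))⁻¹ * Real.exp (-(t ^ 2) / 2)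

/-- The standard normal c.d.f. `Φ`. -/
noncomputable def Phi (x : ℝ) : ℝ := ∫ t in Set.Iic x, gpdf t

open Real Set

lemma gpdf_cont : Continuous gpdf := by
  unfold gpdf; fun_prop

lemma gpdf_pos (t : ℝ) : 0 < gpdf t := by
  unfold gpdf; positivity

lemma gpdf_eq : gpdf = fun t => (Real.sqrt (2 * Real.pi))⁻¹ * Real.exp (-(1/2) * t ^ 2) := by
  funext t; unfold gpdf; ring_nf

lemma gpdf_integrable : Integrable gpdf := by
  rw [gpdf_eq]
  exact (integrable_exp_neg_mul_sq (by norm_num)).const_mul _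

lemma gpdf_integral : ∫ t, gpdf t = 1 := by
  have h := integral_gaussian (1/2)
  rw [gpdf_eq, integral_const_mul, h]
  have : (π / (1/2)) = 2 * π := by ring
  rw [this]
  have h3 : Real.sqrt (2*π) ≠ 0 := by positivity
  field_simp

lemma Phi_lt_one (x : ℝ) : Phi x < 1 := by
  have hsplit : Phi x + ∫ t in Set.Ioi x, gpdf t = 1 := by
    rw [Phi, intervalIntegral.integral_Iic_add_Ioi gpdf_integrable.integrableOn
      gpdf_integrable.integrableOn]
    exact gpdf_integral
  have hpos : 0 < ∫ t in Set.Ioi x, gpdf t := by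
    rw [setIntegral_pos_iff_support_of_nonneg_ae
      (Filter.Eventually.of_forall fun t => (gpdf_pos t).le) gpdf_integrable.integrableOn]
    have : Function.support gpdf = Set.univ := by
      ext t; simp [Function.mem_support, (gpdf_pos t).ne']
    rw [this]
    simpa using measure_Ioi_pos (volume : Measure ℝ) x
  linarith

lemma Phi_zero : Phi 0 = (2⁻¹ : ℝ) := by
  have heven : ∀ t:ℝ, gpdf (-t) = gpdf t := by intro t; unfold gpdf; ring_nf
  have hsym : Phi 0 = ∫ t in Set.Ioi (0:ℝ), gpdf t := by
    rw [Phi, show ∫ t in Set.Iic (0:ℝ), gpdf t = ∫ t in Set.Iic (0:ℝ), gpdf (-t) by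
      simp [heven]]
    rw [integral_comp_neg_Iic]
    norm_num
  have hsplit : Phi 0 + ∫ t in Set.Ioi (0:ℝ), gpdf t = 1 := by
    rw [Phi, intervalIntegral.integral_Iic_add_Ioi gpdf_integrable.integrableOn
      gpdf_integrable.integrableOn]
    exact gpdf_integral
  rw [← hsym] at hsplit
  linarith

lemma Phi_hasDeriv (x : ℝ) : HasDerivAt Phi (gpdf x) x := by
  have key : Phi = fun x => Phi 0 + ∫ t in (0:ℝ)..x, gpdf t := by
    funext y
    rw [← intervalIntegral.integral_Iic_sub_Iic gpdf_integrable.integrableOn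
      gpdf_integrable.integrableOn]
    unfold Phi; ring
  rw [key]
  refine HasDerivAt.const_add _ ?_
  exact intervalIntegral.integral_hasDerivAt_right
    (gpdf_cont.intervalIntegrable _ _)
    (gpdf_cont.stronglyMeasurableAtFilter _ _)
    gpdf_cont.continuousAt

lemma Phi_cont : Continuous Phi :=
  continuous_iff_continuousAt.2 fun x => (Phi_hasDeriv x).continuousAt

noncomputable def qq (n K t : ℝ) : ℝ := 1 + (3 - n)/2 * t - (n/2 + n/K) * t^2 - t^3/2

lemma qq_step (n K : ℝ) (hn : 0 < n) (hK : 0 < K) {t₁ t₂ : ℝ} (h1 : 0 < t₁) (h12 : t₁ < t₂)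
    (hq : qq n K t₁ ≤ 0) : qq n K t₂ < 0 := by
  have ht₂ : 0 < t₂ := h1.trans h12
  have hc : 0 < n/2 + n/K := by positivity
  have key : qq n K t₂ * t₁ - qq n K t₁ * t₂
      = (t₁ - t₂) * (1 + (n/2 + n/K) * (t₁*t₂) + t₁*t₂/2*(t₁+t₂)) := by
    unfold qq; ring
  have hfac : 0 < 1 + (n/2 + n/K) * (t₁*t₂) + t₁*t₂/2*(t₁+t₂) := by
    have := mul_pos hc (mul_pos h1 ht₂)
    nlinarith [mul_pos (mul_pos h1 ht₂) (by linarith : (0:ℝ) < t₁ + t₂)]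
  have h2 : qq n K t₁ * t₂ ≤ 0 := mul_nonpos_of_nonpos_of_nonneg hq ht₂.le
  have h3 : qq n K t₂ * t₁ < 0 := by nlinarith [mul_neg_of_neg_of_pos (by linarith : t₁ - t₂ < 0) hfac]
  nlinarith

noncomputable def hh (n K a : ℝ) : ℝ :=
  Real.log (n/(2*K)) + Real.log (a-1) - 3 * Real.log a - n/(2*K)*(1-a⁻¹)^2
    - (Real.log (Real.sqrt n/(2*Real.sqrt (2*Real.pi))) - 3/2 * Real.log a - n/2*a⁻¹)

noncomputable def hh' (n K a : ℝ) : ℝ :=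
  (a-1)⁻¹ - 3 * a⁻¹ - n/(2*K)*(2*(1-a⁻¹)*(a^2)⁻¹) + 3/2 * a⁻¹ - n/2*(a^2)⁻¹

lemma hh_hasDeriv (n K : ℝ) {a : ℝ} (ha : 1 < a) : HasDerivAt (hh n K) (hh' n K a) a := by
  have ha0 : a ≠ 0 := by positivity
  have ha1 : a - 1 ≠ 0 := by intro h; nlinarith [h]
  have h2 : HasDerivAt (fun a : ℝ => Real.log (a - 1)) ((a-1)⁻¹ * 1) a :=
    HasDerivAt.comp (h₂ := Real.log) a (Real.hasDerivAt_log ha1) ((hasDerivAt_id a).sub_const 1)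
  have h3 : HasDerivAt (fun a : ℝ => 3 * Real.log a) (3 * a⁻¹) a :=
    (Real.hasDerivAt_log ha0).const_mul 3
  have hinv : HasDerivAt (fun y : ℝ => y⁻¹) (-(a^2)⁻¹) a := hasDerivAt_inv ha0
  have h1ma : HasDerivAt (fun a : ℝ => 1 - a⁻¹) ((a^2)⁻¹) a := by
    simpa using hinv.const_sub 1
  have hpow : HasDerivAt (fun a : ℝ => (1-a⁻¹)^2) (2*(1-a⁻¹)*(a^2)⁻¹) a := by
    have := h1ma.pow 2
    refine this.congr_deriv ?_; push_cast; ring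
  have h4 : HasDerivAt (fun a : ℝ => n/(2*K)*(1-a⁻¹)^2) (n/(2*K)*(2*(1-a⁻¹)*(a^2)⁻¹)) a :=
    hpow.const_mul _
  have h6 : HasDerivAt (fun a : ℝ => 3/2 * Real.log a) (3/2 * a⁻¹) a :=
    (Real.hasDerivAt_log ha0).const_mul _
  have h7 : HasDerivAt (fun a : ℝ => n/2 * a⁻¹) (n/2 * -(a^2)⁻¹) a := hinv.const_mul _
  have hright : HasDerivAt
      (fun a : ℝ => Real.log (Real.sqrt n/(2*Real.sqrt (2*Real.pi))) - 3/2 * Real.log a - n/2*a⁻¹)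
      (-(3/2 * a⁻¹) - n/2 * -(a^2)⁻¹) a := (h6.const_sub _).sub h7
  have := (((h2.const_add (Real.log (n/(2*K)))).sub h3).sub h4).sub hright
  refine this.congr_deriv ?_
  unfold hh'; ring

lemma hh'_eq (n K : ℝ) (hK : 0 < K) {a : ℝ} (ha : 1 < a) :
    hh' n K a = qq n K (a-1) / (a^3 * (a-1)) := by
  have ha0 : a ≠ 0 := by positivity
  have ha1 : a - 1 ≠ 0 := by intro h; nlinarith [h]
  have hD : a^3*(a-1) ≠ 0 := mul_ne_zero (pow_ne_zero _ ha0) ha1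
  have key : hh' n K a * (a^3*(a-1)) = qq n K (a-1) := by
    unfold hh' qq
    have hK0 : K ≠ 0 := ne_of_gt hK
    field_simp
    ring
  rw [← key, mul_div_cancel_right₀ _ hD]

lemma hh_no_valley (n K : ℝ) (hn : 0 < n) (hK : 0 < K) {x y z : ℝ}
    (hx : 1 < x) (hxy : x < y) (hyz : y < z)
    (h1 : hh n K y < hh n K x) (h2 : hh n K y < hh n K z) : False := by
  have hy : 1 < y := hx.trans hxy
  have hcont : ∀ s t : ℝ, 1 < s → ContinuousOn (hh n K) (Icc s t) := by
    intro s t hs u hu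
    exact (hh_hasDeriv n K (lt_of_lt_of_le hs hu.1)).continuousAt.continuousWithinAt
  obtain ⟨s₁, hs₁, hs₁eq⟩ := exists_hasDerivAt_eq_slope (hh n K) (hh' n K) hxy
    (hcont x y hx) (fun u hu => hh_hasDeriv n K (hx.trans hu.1))
  obtain ⟨s₂, hs₂, hs₂eq⟩ := exists_hasDerivAt_eq_slope (hh n K) (hh' n K) hyz
    (hcont y z hy) (fun u hu => hh_hasDeriv n K (hy.trans hu.1))
  have hs₁1 : 1 < s₁ := hx.trans hs₁.1
  have hs₂1 : 1 < s₂ := hy.trans hs₂.1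
  have hneg : hh' n K s₁ < 0 := by
    rw [hs₁eq]; apply div_neg_of_neg_of_pos <;> [linarith; linarith]
  have hpos : 0 < hh' n K s₂ := by
    rw [hs₂eq]; apply div_pos <;> linarith
  have hq1 : qq n K (s₁ - 1) ≤ 0 := by
    rw [hh'_eq n K hK hs₁1] at hneg
    by_contra hcon
    push_neg at hcon
    have h9 : 0 < s₁^3 * (s₁ - 1) :=
      mul_pos (by positivity) (by linarith)
    nlinarith [div_pos hcon h9]
  have hq2 : qq n K (s₂ - 1) < 0 :=
    qq_step n K hn hK (by linarith) (by have := hs₁.2; have := hs₂.1; linarith) hq1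
  rw [hh'_eq n K hK hs₂1] at hpos
  have h9 : 0 < s₂^3 * (s₂ - 1) :=
    mul_pos (by positivity) (by linarith)
  nlinarith [div_neg_of_neg_of_pos hq2 h9]

noncomputable def AA (n a : ℝ) : ℝ := gpdf (Real.sqrt (n/a)) * (n/a^2 / (2*Real.sqrt (n/a)))
noncomputable def BB (n K a : ℝ) : ℝ :=
  Real.exp (-(n*(1-1/a)^2)/(2*K)) * (n/K*(1-1/a)*(a^2)⁻¹)/2


lemma AA_pos (n : ℝ) (hn : 0 < n) {a : ℝ} (ha : 0 < a) : 0 < AA n a := by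
  have h1 : 0 < Real.sqrt (n/a) := Real.sqrt_pos.2 (by positivity)
  unfold AA
  have := gpdf_pos (Real.sqrt (n/a))
  positivity

lemma BB_pos (n K : ℝ) (hn : 0 < n) (hK : 0 < K) {a : ℝ} (ha : 1 < a) : 0 < BB n K a := by
  have ha0 : (0:ℝ) < a := by linarith
  have h1 : 0 < 1 - 1/a := by
    rw [sub_pos, div_lt_one ha0]; exact ha
  unfold BB
  positivity

lemma log_BB (n K : ℝ) (hn : 0 < n) (hK : 0 < K) {a : ℝ} (ha : 1 < a) :
    Real.log (BB n K a) =
      Real.log (n/(2*K)) + Real.log (a-1) - 3 * Real.log a - n/(2*K)*(1-a⁻¹)^2 := by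
  have ha0 : (0:ℝ) < a := by linarith
  have ha1 : (0:ℝ) < a - 1 := by linarith
  have hrw : BB n K a = Real.exp (-(n/(2*K)*(1-a⁻¹)^2)) * ((n/(2*K)) * ((a-1)/a^3)) := by
    unfold BB
    rw [show -(n*(1-1/a)^2)/(2*K) = -(n/(2*K)*(1-a⁻¹)^2) by rw [one_div]; ring]
    field_simp
  rw [hrw, Real.log_mul (Real.exp_ne_zero _) (by positivity), Real.log_exp,
    Real.log_mul (by positivity) (by positivity), Real.log_div (by positivity) (by positivity),
    Real.log_div (ne_of_gt ha1) (by positivity), Real.log_pow]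
  push_cast
  ring

lemma log_AA (n : ℝ) (hn : 0 < n) {a : ℝ} (ha : 0 < a) :
    Real.log (AA n a) =
      Real.log (Real.sqrt n/(2*Real.sqrt (2*Real.pi))) - 3/2 * Real.log a - n/2*a⁻¹ := by
  have hsa : (0:ℝ) < Real.sqrt a := Real.sqrt_pos.2 ha
  have hsn : (0:ℝ) < Real.sqrt n := Real.sqrt_pos.2 hn
  have hs2π : (0:ℝ) < Real.sqrt (2*Real.pi) := Real.sqrt_pos.2 (by positivity)
  have hrw : AA n a =
      Real.exp (-(n/2*a⁻¹)) * (Real.sqrt n/(2*Real.sqrt (2*Real.pi)) * (Real.sqrt a / a^2)) := by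
    unfold AA gpdf
    rw [Real.sq_sqrt (by positivity : (0:ℝ) ≤ n/a), Real.sqrt_div hn.le,
      show -(n/a)/2 = -(n/2*a⁻¹) by ring]
    have hn2 : Real.sqrt n ^ 2 = n := Real.sq_sqrt hn.le
    have ha2 : Real.sqrt a ^ 2 = a := Real.sq_sqrt ha.le
    rw [← hn2, ← ha2]
    field_simp
    linear_combination (0 * Real.exp (-n/(2*a)) * Real.sqrt a * Real.sqrt 2 * Real.sqrt Real.pi * a^2) * hn2 - Real.sq_sqrt (sq_nonneg (Real.sqrt n))
  rw [hrw, Real.log_mul (Real.exp_ne_zero _) (by positivity), Real.log_exp,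
    Real.log_mul (by positivity) (by positivity), Real.log_div hsa.ne' (by positivity),
    Real.log_sqrt ha.le, Real.log_pow]
  push_cast
  ring

lemma hh_eq_log (n K : ℝ) (hn : 0 < n) (hK : 0 < K) {a : ℝ} (ha : 1 < a) :
    hh n K a = Real.log (BB n K a) - Real.log (AA n a) := by
  rw [log_BB n K hn hK ha, log_AA n hn (by linarith)]
  unfold hh; ring

lemma Dg_pattern (n K : ℝ) (hn : 0 < n) (hK : 0 < K) {s₀ s₁ s₂ : ℝ}
    (h0 : 1 < s₀) (h01 : s₀ < s₁) (h12 : s₁ < s₂)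
    (d0 : AA n s₀ - BB n K s₀ < 0) (d1 : 0 < AA n s₁ - BB n K s₁)
    (d2 : AA n s₂ - BB n K s₂ < 0) : False := by
  have h1 : 1 < s₁ := h0.trans h01
  have h2 : 1 < s₂ := h1.trans h12
  have hhs₀ : 0 < hh n K s₀ := by
    rw [hh_eq_log n K hn hK h0]
    have := Real.log_lt_log (AA_pos n hn (by linarith)) (by linarith : AA n s₀ < BB n K s₀)
    linarith
  have hhs₁ : hh n K s₁ < 0 := by
    rw [hh_eq_log n K hn hK h1]
    have := Real.log_lt_log (BB_pos n K hn hK h1) (by linarith : BB n K s₁ < AA n s₁)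
    linarith
  have hhs₂ : 0 < hh n K s₂ := by
    rw [hh_eq_log n K hn hK h2]
    have := Real.log_lt_log (AA_pos n hn (by linarith)) (by linarith : AA n s₂ < BB n K s₂)
    linarith
  exact hh_no_valley n K hn hK h0 h01 h12 (by linarith) (by linarith)

lemma g_hasDeriv (C n K : ℝ) (hn : 0 < n) (hK : 0 < K) {a : ℝ} (ha : 0 < a) :
    HasDerivAt
      (fun a => C + Real.exp (-(n * (1 - 1 / a) ^ 2) / (2 * K)) / 2 - Phi (Real.sqrt (n / a)))
      (AA n a - BB n K a) a := by
  have ha0 : a ≠ 0 := ne_of_gt ha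
  have hna : n / a ≠ 0 := by positivity
  have hinv : HasDerivAt (fun y : ℝ => 1 / y) (-(a^2)⁻¹) a := by
    simpa only [one_div] using hasDerivAt_inv ha0
  have e2 : HasDerivAt (fun a : ℝ => 1 - 1/a) ((a^2)⁻¹) a := by
    simpa using hinv.const_sub 1
  have e3 : HasDerivAt (fun a : ℝ => (1 - 1/a)^2) (2*(1-1/a)*(a^2)⁻¹) a := by
    have := e2.pow 2
    refine this.congr_deriv ?_
    push_cast; ring
  have e4 : HasDerivAt (fun a : ℝ => -(n * (1 - 1/a)^2) / (2*K))
      (-(n * (2*(1-1/a)*(a^2)⁻¹)) / (2*K)) a := ((e3.const_mul n).neg).div_const (2*K)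
  have e6 : HasDerivAt (fun a : ℝ => Real.exp (-(n * (1 - 1/a)^2) / (2*K)) / 2)
      (Real.exp (-(n * (1 - 1/a)^2) / (2*K)) * (-(n * (2*(1-1/a)*(a^2)⁻¹)) / (2*K)) / 2) a :=
    e4.exp.div_const 2
  have f1 : HasDerivAt (fun a : ℝ => n / a) (n * -(a^2)⁻¹) a := by
    simpa only [div_eq_mul_inv] using (hasDerivAt_inv ha0).const_mul n
  have f2 : HasDerivAt (fun a : ℝ => Real.sqrt (n/a))
      (1/(2*Real.sqrt (n/a)) * (n * -(a^2)⁻¹)) a := (Real.hasDerivAt_sqrt hna).comp a f1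
  have f3 : HasDerivAt (fun a : ℝ => Phi (Real.sqrt (n/a)))
      (gpdf (Real.sqrt (n/a)) * (1/(2*Real.sqrt (n/a)) * (n * -(a^2)⁻¹))) a :=
    (Phi_hasDeriv _).comp a f2
  have total := (e6.const_add C).sub f3
  refine total.congr_deriv ?_
  unfold AA BB
  ring


/-- The feasibility function
`g(a) = 1 - α/2 + δ + exp(-n(1-1/a)²/(2K))/2 - Φ(√(n/a))` has strictly positive limits
as `a → 1⁺` and `a → ∞`, and its sublevel set `{a ∈ (1,∞) : g(a) < 0}` is an open
interval `(a₁, a₂)` with `1 < a₁` (possibly empty). -/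
theorem stmt_15 (α K n δ : ℝ) (hα : α ∈ Set.Ioo (0 : ℝ) (1 / 2)) (hK : 0 < K)
    (hn : 0 < n) (hδ : δ ∈ Set.Ioo (0 : ℝ) (α / 2))
    (g : ℝ → ℝ)
    (hg : g = fun a =>
      1 - α / 2 + δ + Real.exp (-(n * (1 - 1 / a) ^ 2) / (2 * K)) / 2
        - Phi (Real.sqrt (n / a))) :
    (∃ L, 0 < L ∧ Filter.Tendsto g (nhdsWithin 1 (Set.Ioi 1)) (nhds L)) ∧
    (∃ M, 0 < M ∧ Filter.Tendsto g Filter.atTop (nhds M)) ∧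
    ({a : ℝ | 1 < a ∧ g a < 0} = ∅ ∨
      ∃ a₁ a₂ : ℝ, 1 < a₁ ∧ {a : ℝ | 1 < a ∧ g a < 0} = Set.Ioo a₁ a₂) := by
  obtain ⟨hα0, hα2⟩ := hα
  obtain ⟨hδ0, hδ2⟩ := hδ
  subst hg
  set C : ℝ := 1 - α / 2 + δ with hC
  set G : ℝ → ℝ := fun a =>
    C + Real.exp (-(n * (1 - 1 / a) ^ 2) / (2 * K)) / 2 - Phi (Real.sqrt (n / a)) with hGdef
  have hDG : ∀ {a : ℝ}, 0 < a → HasDerivAt G (AA n a - BB n K a) a :=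
    fun {a} ha => g_hasDeriv C n K hn hK ha
  -- Limit at 1⁺
  have hG1 : G 1 = C + 1/2 - Phi (Real.sqrt n) := by
    simp [hGdef]
  have hL : Filter.Tendsto G (nhdsWithin 1 (Set.Ioi 1)) (nhds (G 1)) :=
    (hDG one_pos).continuousAt.continuousWithinAt
  have hLpos : 0 < G 1 := by
    have := Phi_lt_one (Real.sqrt n)
    rw [hG1]; linarith
  -- Limit at ∞
  have h1a : Filter.Tendsto (fun a : ℝ => 1 / a) Filter.atTop (nhds 0) := by
    simpa only [one_div] using tendsto_inv_atTop_zero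
  have hexp : Filter.Tendsto (fun a : ℝ => Real.exp (-(n * (1 - 1 / a) ^ 2) / (2 * K)) / 2)
      Filter.atTop (nhds (Real.exp (-(n * (1 - (0:ℝ)) ^ 2) / (2 * K)) / 2)) := by
    apply Filter.Tendsto.div_const
    apply (Real.continuous_exp.tendsto _).comp
    apply Filter.Tendsto.div_const
    apply Filter.Tendsto.neg
    exact (Filter.Tendsto.const_mul n ((tendsto_const_nhds.sub h1a).pow 2))
  have hna : Filter.Tendsto (fun a : ℝ => n / a) Filter.atTop (nhds 0) := by
    have := h1a.const_mul n
    simpa [mul_one_div, div_eq_mul_inv] using this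
  have hsq : Filter.Tendsto (fun a : ℝ => Real.sqrt (n / a)) Filter.atTop (nhds 0) := by
    have := (Real.continuous_sqrt.tendsto 0).comp hna
    simpa [Function.comp_def] using this
  have hPhiT : Filter.Tendsto (fun a : ℝ => Phi (Real.sqrt (n / a))) Filter.atTop
      (nhds (2⁻¹ : ℝ)) := by
    have := (Phi_cont.tendsto 0).comp hsq
    rwa [Phi_zero] at this
  have hM : Filter.Tendsto G Filter.atTop
      (nhds (C + Real.exp (-(n * (1 - (0:ℝ)) ^ 2) / (2 * K)) / 2 - 2⁻¹)) :=
    (tendsto_const_nhds.add hexp).sub hPhiT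
  have hMpos : 0 < C + Real.exp (-(n * (1 - (0:ℝ)) ^ 2) / (2 * K)) / 2 - 2⁻¹ := by
    have := Real.exp_pos (-(n * (1 - (0:ℝ)) ^ 2) / (2 * K))
    rw [hC]; linarith
  refine ⟨⟨G 1, hLpos, hL⟩, ⟨_, hMpos, hM⟩, ?_⟩
  -- Sublevel set structure
  set S : Set ℝ := {a : ℝ | 1 < a ∧ G a < 0} with hSdef
  by_cases hS : S = ∅
  · exact Or.inl hS
  right
  have hne : S.Nonempty := Set.nonempty_iff_ne_empty.2 hS
  have hev1 : ∀ᶠ a in nhdsWithin 1 (Set.Ioi 1), 0 < G a :=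
    hL.eventually (eventually_gt_nhds hLpos)
  rw [(nhdsGT_basis (1:ℝ)).eventually_iff] at hev1
  obtain ⟨ε, hε1, hε⟩ := hev1
  obtain ⟨R, hR⟩ := Filter.eventually_atTop.1 (hM.eventually (eventually_gt_nhds hMpos))
  have hSsub : ∀ a ∈ S, ε ≤ a ∧ a < R := by
    intro a haS
    constructor
    · by_contra hcon
      push_neg at hcon
      exact absurd (hε ⟨haS.1, hcon⟩) (by simpa using haS.2.le)
    · by_contra hcon
      push_neg at hcon
      exact absurd (hR a hcon) (by simpa using haS.2.le)
  have hbddB : BddBelow S := ⟨ε, fun b hb => (hSsub b hb).1⟩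
  have hbddA : BddAbove S := ⟨R, fun b hb => (hSsub b hb).2.le⟩
  have hopen : IsOpen S := by
    rw [isOpen_iff_mem_nhds]
    intro a haS
    have h₁ : ∀ᶠ x in nhds a, G x < 0 :=
      (hDG (by linarith [haS.1] : (0:ℝ) < a)).continuousAt.tendsto.eventually
        (eventually_lt_nhds haS.2)
    have h₂ : ∀ᶠ x in nhds a, 1 < x := eventually_gt_nhds haS.1
    exact h₂.and h₁
  -- order connectedness
  have hord : ∀ u ∈ S, ∀ v ∈ S, ∀ w, u ≤ w → w ≤ v → w ∈ S := by
    intro u huS v hvS w huw hwv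
    rcases eq_or_lt_of_le huw with rfl | huw
    · exact huS
    rcases eq_or_lt_of_le hwv with rfl | hwv
    · exact hvS
    refine ⟨huS.1.trans huw, ?_⟩
    by_contra hw
    push_neg at hw
    set w₀ : ℝ := (1 + ε)/2 with hw₀def
    have hw₀1 : 1 < w₀ := by rw [hw₀def]; linarith
    have hw₀ε : w₀ < ε := by rw [hw₀def]; linarith
    have hw₀u : w₀ < u := hw₀ε.trans_le (hSsub u huS).1
    have hGw₀ : 0 < G w₀ := hε ⟨hw₀1, hw₀ε⟩
    have hcont : ∀ p q : ℝ, 1 ≤ p → ContinuousOn G (Set.Icc p q) := fun p q hp x hx =>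
      (hDG (by linarith [hx.1] : (0:ℝ) < x)).continuousAt.continuousWithinAt
    have hderiv : ∀ p q : ℝ, 1 ≤ p → ∀ x ∈ Set.Ioo p q,
        HasDerivAt G (AA n x - BB n K x) x := fun p q hp x hx =>
      hDG (by linarith [hx.1] : (0:ℝ) < x)
    obtain ⟨s₀, hs₀, hs₀eq⟩ := exists_hasDerivAt_eq_slope G (fun x => AA n x - BB n K x)
      hw₀u (hcont w₀ u hw₀1.le) (hderiv w₀ u hw₀1.le)
    obtain ⟨s₁, hs₁, hs₁eq⟩ := exists_hasDerivAt_eq_slope G (fun x => AA n x - BB n K x)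
      huw (hcont u w huS.1.le) (hderiv u w huS.1.le)
    obtain ⟨s₂, hs₂, hs₂eq⟩ := exists_hasDerivAt_eq_slope G (fun x => AA n x - BB n K x)
      hwv (hcont w v (huS.1.trans huw).le) (hderiv w v (huS.1.trans huw).le)
    have d0 : AA n s₀ - BB n K s₀ < 0 := by
      rw [hs₀eq]
      exact div_neg_of_neg_of_pos (by linarith [huS.2]) (by linarith)
    have d1 : 0 < AA n s₁ - BB n K s₁ := by
      rw [hs₁eq]
      exact div_pos (by linarith [huS.2]) (by linarith)
    have d2 : AA n s₂ - BB n K s₂ < 0 := by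
      rw [hs₂eq]
      exact div_neg_of_neg_of_pos (by linarith [hvS.2]) (by linarith)
    exact Dg_pattern n K hn hK (hw₀1.trans hs₀.1) (hs₀.2.trans hs₁.1)
      (hs₁.2.trans hs₂.1) d0 d1 d2
  refine ⟨sInf S, sSup S, lt_of_lt_of_le hε1 (le_csInf hne fun b hb => (hSsub b hb).1), ?_⟩
  ext x
  constructor
  · intro hx
    obtain ⟨r, hr, hball⟩ := Metric.isOpen_iff.1 hopen x hx
    have hlo : x - r/2 ∈ S := hball (by
      rw [Metric.mem_ball, Real.dist_eq]
      rw [abs_of_nonpos (by linarith)]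
      linarith)
    have hhi : x + r/2 ∈ S := hball (by
      rw [Metric.mem_ball, Real.dist_eq]
      rw [abs_of_nonneg (by linarith)]
      linarith)
    exact ⟨lt_of_le_of_lt (csInf_le hbddB hlo) (by linarith),
      lt_of_lt_of_le (by linarith) (le_csSup hbddA hhi)⟩
  · intro hx
    obtain ⟨u, huS, hu⟩ := exists_lt_of_csInf_lt hne hx.1
    obtain ⟨v, hvS, hv⟩ := exists_lt_of_lt_csSup hne hx.2
    exact hord u huS v hvS x hu.le hv.le
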